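/- Let G be a Hermitian matrix, ρ = e^{-G}/Tr e^{-G}, and define ⟨A;B⟩ = ∫₀¹ Tr[e^{νG} A† e^{-νG} B ρ] dν and ⟨X⟩ = Tr[Xρ]. Then for any matrix A, ⟨A;A⟩ ≤ (1/2)⟨{A†, A}⟩, where {X,Y} = XY + YX is the anticommutator. -/

import Mathlib

open NormedSpace Matrix



lemma BH_aux_g (t : ℝ) (ht : 0 ≤ t) : 1 - Real.exp (-t) ≤ t / 2 * (Real.exp (-t) + 1) := by
  set g : ℝ → ℝ := fun t => t / 2 * (Real.exp (-t) + 1) - (1 - Real.exp (-t)) with hg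
  have hd : ∀ x : ℝ, HasDerivAt g ((1 - (1 + x) * Real.exp (-x)) / 2) x := by
    intro x
    have h1 : HasDerivAt (fun x : ℝ => Real.exp (-x)) (-Real.exp (-x)) x := by
      simpa using (hasDerivAt_neg x).exp
    have h2 : HasDerivAt (fun x : ℝ => x / 2 * (Real.exp (-x) + 1))
        ((1:ℝ)/2 * (Real.exp (-x) + 1) + x / 2 * (-Real.exp (-x))) x :=
      ((hasDerivAt_id x).div_const 2).mul (h1.add_const 1)
    have h3 := h2.sub ((hasDerivAt_const x (1:ℝ)).sub h1)
    exact h3.congr_deriv (by ring)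
  have hmono : MonotoneOn g (Set.Ici 0) := by
    apply monotoneOn_of_deriv_nonneg (convex_Ici 0)
    · exact Continuous.continuousOn (by continuity)
    · intro x hx
      exact (hd x).differentiableAt.differentiableWithinAt
    · intro x hx
      rw [(hd x).deriv]
      have : (1 + x) * Real.exp (-x) ≤ 1 := by
        rw [Real.exp_neg, mul_inv_le_iff₀ (Real.exp_pos x)]
        simpa [add_comm] using Real.add_one_le_exp x
      linarith
  have := hmono Set.self_mem_Ici (Set.mem_Ici.mpr ht) ht
  simp only [hg] at this
  simp at this
  linarith [this]

/-- The kernel appearing in the Duhamel integral. -/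
noncomputable def BHFk (a b : ℝ) : ℝ :=
  if a = b then Real.exp (-a) else (Real.exp (-b) - Real.exp (-a)) / (a - b)

lemma BH_aux_ne (a b : ℝ) (h : b < a) :
    (Real.exp (-b) - Real.exp (-a)) / (a - b) ≤ (Real.exp (-a) + Real.exp (-b)) / 2 := by
  rw [div_le_iff₀ (by linarith)]
  have h0 := BH_aux_g (a - b) (by linarith)
  have hb := Real.exp_pos (-b)
  have key := mul_le_mul_of_nonneg_left h0 hb.le
  have e1 : Real.exp (-(a-b)) * Real.exp (-b) = Real.exp (-a) := by
    rw [← Real.exp_add]; ring_nf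
  nlinarith [key, e1]

lemma BHFk_le (a b : ℝ) : BHFk a b ≤ (Real.exp (-a) + Real.exp (-b)) / 2 := by
  unfold BHFk
  rcases eq_or_ne a b with h | h
  · subst h; simp
  · rw [if_neg h]
    rcases lt_or_gt_of_ne h with h2 | h2
    · have h3 := BH_aux_ne b a h2
      have e : (Real.exp (-a) - Real.exp (-b)) / (b - a)
          = (Real.exp (-b) - Real.exp (-a)) / (a - b) := by
        rw [div_eq_div_iff (by linarith) (by linarith)]; ring
      rw [e] at h3; linarith
    · have h3 := BH_aux_ne a b h2; linarith

lemma BH_integral_Fk (a b : ℝ) :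
    (∫ ν in (0:ℝ)..1, Complex.exp ((ν:ℂ) * ((a:ℂ) - b)) * Complex.exp (-(a:ℂ)))
      = (BHFk a b : ℂ) := by
  rcases eq_or_ne a b with h | h
  · subst h
    simp [BHFk]
  · have hc : ((a:ℂ) - b) ≠ 0 := by
      simpa using sub_ne_zero.mpr (by exact_mod_cast h : (a:ℂ) ≠ (b:ℂ))
    have h1 : (∫ ν in (0:ℝ)..1, Complex.exp ((ν:ℂ) * ((a:ℂ) - b)) * Complex.exp (-(a:ℂ)))
        = (∫ ν in (0:ℝ)..1, Complex.exp (((a:ℂ) - b) * ν)) * Complex.exp (-(a:ℂ)) := by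
      rw [intervalIntegral.integral_mul_const]
      congr 1
      apply intervalIntegral.integral_congr
      intro ν _; dsimp; rw [mul_comm]
    rw [h1, integral_exp_mul_complex hc]
    rw [BHFk, if_neg h]
    have hab : ((a:ℂ) - b) = ((a - b : ℝ) : ℂ) := by push_cast; ring
    rw [Complex.ofReal_div, Complex.ofReal_sub, eq_div_iff (by exact_mod_cast hab ▸ hc)]
    rw [div_mul_eq_mul_div, div_mul_eq_mul_div, div_eq_iff hc]
    rw [Complex.ofReal_exp, Complex.ofReal_exp]
    push_cast
    rw [mul_one, mul_zero, Complex.exp_zero, sub_mul, one_mul, sub_mul, ← Complex.exp_add]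
    have e1 : (a:ℂ) - b + -a = -b := by ring
    rw [e1]
    ring

/-! Auxiliary matrix lemmas -/

section MatrixAux

variable {n : Type*} [Fintype n] [DecidableEq n]

lemma BH_trace_ddd (d1 d2 d3 : n → ℂ) (M N : Matrix n n ℂ) :
    Matrix.trace (Matrix.diagonal d1 * M * Matrix.diagonal d2 * N * Matrix.diagonal d3)
      = ∑ i, ∑ j, d1 i * M i j * d2 j * N j i * d3 i := by
  unfold Matrix.trace
  refine Finset.sum_congr rfl fun i _ => ?_
  rw [Matrix.diag_apply, Matrix.mul_diagonal, Matrix.mul_apply, Finset.sum_mul]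
  refine Finset.sum_congr rfl fun j _ => ?_
  rw [Matrix.mul_diagonal, Matrix.diagonal_mul]

lemma BH_trace_mmd (d : n → ℂ) (M N : Matrix n n ℂ) :
    Matrix.trace (M * N * Matrix.diagonal d) = ∑ i, ∑ j, M i j * N j i * d i := by
  unfold Matrix.trace
  refine Finset.sum_congr rfl fun i _ => ?_
  rw [Matrix.diag_apply, Matrix.mul_diagonal, Matrix.mul_apply, Finset.sum_mul]

lemma BH_conj_mul_conj (U : Matrix n n ℂ) (hsU : star U * U = 1) (X Y : Matrix n n ℂ) :
    (U * X * star U) * (U * Y * star U) = U * (X * Y) * star U := by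
  calc (U * X * star U) * (U * Y * star U)
      = U * (X * ((star U * U) * (Y * star U))) := by simp only [Matrix.mul_assoc]
    _ = U * (X * Y) * star U := by rw [hsU, one_mul]; simp only [Matrix.mul_assoc]

lemma BH_trace_conj (U : Matrix n n ℂ) (hsU : star U * U = 1) (M : Matrix n n ℂ) :
    Matrix.trace (U * M * star U) = Matrix.trace M := by
  rw [Matrix.trace_mul_cycle, hsU, one_mul]

lemma BH_exp_smul_eq (G : Matrix n n ℂ) (hG : G.IsHermitian) (c : ℂ) :
    exp (c • G) = (hG.eigenvectorUnitary : Matrix n n ℂ)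
      * Matrix.diagonal (fun i => Complex.exp (c * hG.eigenvalues i))
      * star (hG.eigenvectorUnitary : Matrix n n ℂ) := by
  set U : Matrix n n ℂ := (hG.eigenvectorUnitary : Matrix n n ℂ) with hU
  have hsU : star U * U = 1 := Matrix.mem_unitaryGroup_iff'.mp hG.eigenvectorUnitary.2
  have hUinv : U⁻¹ = star U := Matrix.inv_eq_left_inv hsU
  have hUnit : IsUnit U :=
    Matrix.isUnit_iff_isUnit_det U |>.mpr
      (Matrix.isUnit_det_of_right_inverse (Matrix.mem_unitaryGroup_iff.mp hG.eigenvectorUnitary.2))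
  have h1 : c • G = U * Matrix.diagonal (fun i => c * (hG.eigenvalues i : ℂ)) * star U := by
    conv_lhs => rw [hG.spectral_theorem]
    rw [Unitary.conjStarAlgAut_apply, ← smul_mul_assoc, ← mul_smul_comm]
    congr 2
    rw [← Matrix.diagonal_smul]
    exact congrArg Matrix.diagonal (funext fun i => by simp)
  rw [h1, ← hUinv, Matrix.exp_conj U _ hUnit, hUinv]
  congr 2
  rw [Matrix.exp_diagonal]
  congr 1
  funext i
  rw [Pi.exp_def, ← Complex.exp_eq_exp_ℂ]

end MatrixAux

/-- The Bogoliubov–Duhamel inner product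
⟨A;B⟩ = ∫₀¹ Tr[e^{νG} A† e^{-νG} B ρ] dν with ρ = e^{-G}/Tr e^{-G}. -/
noncomputable def BDinner {n : Type*} [Fintype n] [DecidableEq n]
    (G : Matrix n n ℂ) (A B : Matrix n n ℂ) : ℂ :=
  ∫ ν in (0:ℝ)..1,
    Matrix.trace (exp ((ν : ℂ) • G) * Aᴴ * exp (-((ν : ℂ) • G)) * B *
      ((Matrix.trace (exp (-G)))⁻¹ • exp (-G)))

/-- Brooks Harris inequality: ⟨A;A⟩ ≤ (1/2)⟨{A†,A}⟩ in the Gibbs state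
ρ = e^{-G}/Tr e^{-G}. -/
theorem stmt11 {n : Type*} [Fintype n] [DecidableEq n] [Nonempty n]
    (G : Matrix n n ℂ) (hG : G.IsHermitian) (A : Matrix n n ℂ) :
    (BDinner G A A).re ≤ (1 / 2) *
      (Matrix.trace ((Aᴴ * A + A * Aᴴ) *
        ((Matrix.trace (exp (-G)))⁻¹ • exp (-G)))).re := by
  classical
  set U : Matrix n n ℂ := (hG.eigenvectorUnitary : Matrix n n ℂ) with hUdef
  set lam : n → ℝ := hG.eigenvalues with hlam
  have hsU : star U * U = 1 := Matrix.mem_unitaryGroup_iff'.mp hG.eigenvectorUnitary.2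
  have hUs : U * star U = 1 := Matrix.mem_unitaryGroup_iff.mp hG.eigenvectorUnitary.2
  set B : Matrix n n ℂ := star U * A * U with hB
  have hunconj : ∀ M : Matrix n n ℂ, U * (star U * M * U) * star U = M := by
    intro M
    calc U * (star U * M * U) * star U
        = (U * star U) * M * (U * star U) := by simp only [Matrix.mul_assoc]
      _ = M := by rw [hUs, one_mul, mul_one]
  have hAeq : A = U * B * star U := (hunconj A).symm
  have hBH : Bᴴ = star U * Aᴴ * U := by
    rw [hB]
    simp only [← Matrix.star_eq_conjTranspose, Matrix.star_mul, star_star, Matrix.mul_assoc]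
  have hAH : Aᴴ = U * Bᴴ * star U := by rw [hBH]; exact (hunconj Aᴴ).symm
  set w : n → n → ℝ := fun i j => Complex.normSq (B j i) with hw
  set Z : ℝ := ∑ i, Real.exp (-(lam i)) with hZ
  have hZpos : 0 < Z := Finset.sum_pos (fun i _ => Real.exp_pos _) Finset.univ_nonempty
  -- exponentials
  have hE3 : exp (-G) = U * Matrix.diagonal (fun i => Complex.exp (-(lam i : ℂ))) * star U := by
    rw [show -G = (-1 : ℂ) • G from by rw [neg_one_smul]]
    rw [BH_exp_smul_eq G hG (-1)]
    congr 2
    exact congrArg Matrix.diagonal (funext fun i => by rw [neg_one_mul])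
  have hZc : Matrix.trace (exp (-G)) = (Z : ℂ) := by
    rw [hE3, BH_trace_conj U hsU, Matrix.trace_diagonal, hZ]
    push_cast [Complex.ofReal_exp]
    rfl
  -- integrand computation
  have hEnu : ∀ ν : ℝ, exp ((ν:ℂ) • G)
      = U * Matrix.diagonal (fun i => Complex.exp ((ν:ℂ) * lam i)) * star U :=
    fun ν => BH_exp_smul_eq G hG (ν:ℂ)
  have hEnu' : ∀ ν : ℝ, exp (-((ν:ℂ) • G))
      = U * Matrix.diagonal (fun i => Complex.exp (-(ν:ℂ) * lam i)) * star U := by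
    intro ν
    rw [show -((ν:ℂ) • G) = (-(ν:ℂ)) • G from by rw [neg_smul]]
    exact BH_exp_smul_eq G hG (-(ν:ℂ))
  have hInt : ∀ ν : ℝ,
      Matrix.trace (exp ((ν : ℂ) • G) * Aᴴ * exp (-((ν : ℂ) • G)) * A *
        ((Matrix.trace (exp (-G)))⁻¹ • exp (-G)))
      = ((Z:ℂ))⁻¹ * ∑ i, ∑ j, (w i j : ℂ) *
          (Complex.exp ((ν:ℂ) * ((lam i : ℂ) - (lam j : ℂ))) * Complex.exp (-(lam i : ℂ))) := by
    intro ν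
    rw [Matrix.mul_smul, Matrix.trace_smul, hZc, smul_eq_mul]
    congr 1
    rw [hEnu ν, hEnu' ν, hE3]
    conv_lhs => rw [hAH, hAeq]
    rw [BH_conj_mul_conj U hsU, BH_conj_mul_conj U hsU, BH_conj_mul_conj U hsU,
      BH_conj_mul_conj U hsU, BH_trace_conj U hsU, BH_trace_ddd]
    refine Finset.sum_congr rfl fun i _ => Finset.sum_congr rfl fun j _ => ?_
    rw [Matrix.conjTranspose_apply]
    have hns : ((w i j : ℝ) : ℂ) = star (B j i) * B j i := by
      rw [hw]
      exact_mod_cast (Complex.normSq_eq_conj_mul_self (z := B j i))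
    rw [hns]
    have hxp : Complex.exp ((ν:ℂ) * ((lam i : ℂ) - (lam j : ℂ)))
        = Complex.exp ((ν:ℂ) * lam i) * Complex.exp (-(ν:ℂ) * lam j) := by
      rw [← Complex.exp_add]; congr 1; ring
    rw [hxp]
    ring
  -- continuity
  have hcont : ∀ i j : n, Continuous (fun ν : ℝ => (w i j : ℂ) *
      (Complex.exp ((ν:ℂ) * ((lam i : ℂ) - (lam j : ℂ))) * Complex.exp (-(lam i : ℂ)))) := by
    intro i j
    exact continuous_const.mul
      (((Complex.continuous_exp.comp (Complex.continuous_ofReal.mul continuous_const))).mul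
        continuous_const)
  have hBD : BDinner G A A = ((Z⁻¹ * ∑ i, ∑ j, w i j * BHFk (lam i) (lam j) : ℝ) : ℂ) := by
    unfold BDinner
    rw [intervalIntegral.integral_congr (g := fun ν : ℝ => ((Z:ℂ))⁻¹ * ∑ i, ∑ j, (w i j : ℂ) *
          (Complex.exp ((ν:ℂ) * ((lam i : ℂ) - (lam j : ℂ))) * Complex.exp (-(lam i : ℂ))))
        (fun ν _ => hInt ν)]
    rw [intervalIntegral.integral_const_mul]
    rw [intervalIntegral.integral_finset_sum (fun i _ =>
      Continuous.intervalIntegrable (continuous_finset_sum _ (fun j _ => hcont i j)) _ _)]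
    have hsum : ∀ i : n, (∫ ν in (0:ℝ)..1, ∑ j, (w i j : ℂ) *
        (Complex.exp ((ν:ℂ) * ((lam i : ℂ) - (lam j : ℂ))) * Complex.exp (-(lam i : ℂ))))
        = ∑ j, (w i j : ℂ) * (BHFk (lam i) (lam j) : ℂ) := by
      intro i
      rw [intervalIntegral.integral_finset_sum (fun j _ =>
        Continuous.intervalIntegrable (hcont i j) _ _)]
      refine Finset.sum_congr rfl fun j _ => ?_
      rw [intervalIntegral.integral_const_mul, BH_integral_Fk (lam i) (lam j)]
    rw [Finset.sum_congr rfl (fun i _ => hsum i)]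
    push_cast
    ring
  -- RHS computation
  have hns : ∀ i j : n, ((w i j : ℝ) : ℂ) = star (B j i) * B j i := by
    intro i j
    rw [hw]
    exact_mod_cast (Complex.normSq_eq_conj_mul_self (z := B j i))
  have ht1 : Matrix.trace (Aᴴ * A * exp (-G))
      = ∑ i, ∑ j, (w i j : ℂ) * Complex.exp (-(lam i : ℂ)) := by
    conv_lhs => rw [hAH, hAeq]
    rw [hE3, BH_conj_mul_conj U hsU, BH_conj_mul_conj U hsU, BH_trace_conj U hsU, BH_trace_mmd]
    refine Finset.sum_congr rfl fun i _ => Finset.sum_congr rfl fun j _ => ?_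
    rw [Matrix.conjTranspose_apply, hns i j]
  have ht2 : Matrix.trace (A * Aᴴ * exp (-G))
      = ∑ i, ∑ j, (w i j : ℂ) * Complex.exp (-(lam j : ℂ)) := by
    conv_lhs => rw [hAH, hAeq]
    rw [hE3, BH_conj_mul_conj U hsU, BH_conj_mul_conj U hsU, BH_trace_conj U hsU, BH_trace_mmd]
    rw [Finset.sum_comm]
    refine Finset.sum_congr rfl fun i _ => Finset.sum_congr rfl fun j _ => ?_
    rw [Matrix.conjTranspose_apply, hns i j]
    ring
  have hRHS : Matrix.trace ((Aᴴ * A + A * Aᴴ) *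
        ((Matrix.trace (exp (-G)))⁻¹ • exp (-G)))
      = ((Z⁻¹ * ∑ i, ∑ j, w i j * (Real.exp (-(lam i)) + Real.exp (-(lam j))) : ℝ) : ℂ) := by
    rw [Matrix.mul_smul, Matrix.trace_smul, hZc, smul_eq_mul, add_mul, Matrix.trace_add,
      ht1, ht2]
    push_cast
    simp only [mul_add, Finset.sum_add_distrib]
  -- final inequality
  rw [hBD, hRHS, Complex.ofReal_re, Complex.ofReal_re]
  have hterm : ∀ i j : n, w i j * BHFk (lam i) (lam j)
      ≤ 1/2 * (w i j * (Real.exp (-(lam i)) + Real.exp (-(lam j)))) := by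
    intro i j
    have h1 := BHFk_le (lam i) (lam j)
    have h2 : (0:ℝ) ≤ w i j := Complex.normSq_nonneg _
    nlinarith
  calc Z⁻¹ * ∑ i, ∑ j, w i j * BHFk (lam i) (lam j)
      ≤ Z⁻¹ * ∑ i, ∑ j, 1/2 * (w i j * (Real.exp (-(lam i)) + Real.exp (-(lam j)))) := by
        refine mul_le_mul_of_nonneg_left ?_ (inv_nonneg.mpr hZpos.le)
        exact Finset.sum_le_sum fun i _ => Finset.sum_le_sum fun j _ => hterm i j
    _ = 1/2 * (Z⁻¹ * ∑ i, ∑ j, w i j * (Real.exp (-(lam i)) + Real.exp (-(lam j)))) := by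
        simp only [← Finset.mul_sum]
        ring
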